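/- The sequence L is subadditive: for all integers k, m ≥ 0, L_{k+m} ≤ L_k + L_m. -/

import Mathlib

/-- `Lseg n = Σ_{k=1}^{n} (−1)^{k+1} (2^{k−1}/k!) (n−k+1)`, the expected number of
transmissions in one slot from a fully occupied segment of `n` nodes (so `Lseg 0 = 0`). -/
noncomputable def Lseg (n : ℕ) : ℝ :=
  ∑ k ∈ Finset.Icc 1 n,
    (-1 : ℝ) ^ (k + 1) * (2 ^ (k - 1) / (Nat.factorial k : ℝ)) * ((n : ℝ) - (k : ℝ) + 1)

open Finset

/-- The weight at position `i+1`: `2^i / (i+1)!`. -/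
noncomputable def Lv (i : ℕ) : ℝ := 2 ^ i / (Nat.factorial (i + 1) : ℝ)

lemma Lv_nonneg (i : ℕ) : 0 ≤ Lv i := by
  unfold Lv; positivity

lemma Lv_antitone (i : ℕ) : Lv (i + 1) ≤ Lv i := by
  unfold Lv
  rw [div_le_div_iff₀ (by positivity) (by positivity)]
  have h : (Nat.factorial (i + 1 + 1) : ℝ) = (i + 2) * (Nat.factorial (i + 1) : ℝ) := by
    rw [Nat.factorial_succ]; push_cast; ring
  rw [h, pow_succ]
  have h2 : (0:ℝ) ≤ (i:ℝ) := by positivity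
  have h3 : (0:ℝ) < (Nat.factorial (i + 1) : ℝ) := by positivity
  have h4 : (0:ℝ) < (2:ℝ) ^ i := by positivity
  nlinarith [mul_pos h4 h3, mul_nonneg h2 (mul_pos h4 h3).le]

/-- Successive difference of the weights. -/
noncomputable def Lu (i : ℕ) : ℝ := Lv i - Lv (i + 1)

lemma Lu_nonneg (i : ℕ) : 0 ≤ Lu i := sub_nonneg.2 (Lv_antitone i)

lemma Lu_antitone (i : ℕ) : Lu (i + 1 + 1) ≤ Lu (i + 1) := by
  unfold Lu Lv
  have hF : (0:ℝ) < (Nat.factorial (i + 2) : ℝ) := by positivity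
  have h3 : (Nat.factorial (i + 3) : ℝ) = (i + 3) * (Nat.factorial (i + 2) : ℝ) := by
    rw [show i + 3 = (i + 2) + 1 from rfl, Nat.factorial_succ]; push_cast; ring
  have h4 : (Nat.factorial (i + 4) : ℝ) = (i + 4) * (i + 3) * (Nat.factorial (i + 2) : ℝ) := by
    rw [show i + 4 = (i + 3) + 1 from rfl, Nat.factorial_succ]
    push_cast
    rw [h3]; ring
  have e1 : i + 1 + 1 = i + 2 := rfl
  have e2 : i + 1 + 1 + 1 = i + 3 := rfl
  have e3 : i + 2 + 1 = i + 3 := rfl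
  have e4 : i + 3 + 1 = i + 4 := rfl
  rw [e1, e2]
  rw [show i + 2 + 1 = i + 3 from rfl] at *
  rw [h3]
  rw [show Nat.factorial (i + 3 + 1) = Nat.factorial (i + 4) from rfl, h4]
  have hx : (0:ℝ) ≤ (i:ℝ) := by positivity
  have hp : (0:ℝ) < (2:ℝ) ^ i := by positivity
  have hi3 : (0:ℝ) < (i:ℝ) + 3 := by linarith
  have hi4 : (0:ℝ) < (i:ℝ) + 4 := by linarith
  simp only [pow_succ]
  rw [div_sub_div _ _ (by positivity) (by positivity), div_sub_div _ _ (by positivity) (by positivity),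
    div_le_div_iff₀ (by positivity) (by positivity)]
  have hY : (0:ℝ) ≤ ((Nat.factorial (i + 2) : ℝ)) ^ 3 * 2 ^ i := by positivity
  nlinarith [mul_nonneg hx hY, mul_nonneg (mul_nonneg hx hx) hY,
    mul_nonneg (mul_nonneg (mul_nonneg hx hx) hx) hY,
    mul_nonneg (mul_nonneg (mul_nonneg (mul_nonneg hx hx) hx) hx) hY]

/-- Alternating sums of a nonnegative antitone sequence lie in `[0, f 0]`. -/
lemma alt_sum_bounds (f : ℕ → ℝ) (h0 : ∀ i, 0 ≤ f i) (h1 : ∀ i, f (i + 1) ≤ f i) (n : ℕ) :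
    0 ≤ ∑ i ∈ range n, (-1 : ℝ) ^ i * f i ∧ ∑ i ∈ range n, (-1 : ℝ) ^ i * f i ≤ f 0 := by
  induction n generalizing f with
  | zero => simpa using h0 0
  | succ n ih =>
    have key : ∑ i ∈ range (n + 1), (-1 : ℝ) ^ i * f i
        = f 0 - ∑ i ∈ range n, (-1 : ℝ) ^ i * f (i + 1) := by
      rw [Finset.sum_range_succ']
      have : ∑ i ∈ range n, (-1 : ℝ) ^ (i + 1) * f (i + 1)
          = -∑ i ∈ range n, (-1 : ℝ) ^ i * f (i + 1) := by
        rw [← Finset.sum_neg_distrib]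
        exact Finset.sum_congr rfl (fun i _ => by ring)
      rw [this]; ring
    obtain ⟨ha, hb⟩ := ih (fun i => f (i + 1)) (fun i => h0 (i + 1)) (fun i => h1 (i + 1))
    constructor
    · rw [key]; have := h1 0; linarith
    · rw [key]; linarith

lemma alt_sum_nonneg (f : ℕ → ℝ) (h0 : ∀ i, 0 ≤ f i) (h1 : ∀ i, f (i + 1) ≤ f i) (n : ℕ) :
    0 ≤ ∑ i ∈ range n, (-1 : ℝ) ^ i * f i :=
  (alt_sum_bounds f h0 h1 n).1

lemma Lseg_eq (n : ℕ) : Lseg n = ∑ i ∈ range n, (-1 : ℝ) ^ i * Lv i * ((n : ℝ) - i) := by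
  unfold Lseg
  rw [← Finset.Ico_add_one_right_eq_Icc, Finset.sum_Ico_eq_sum_range]
  simp only [Nat.add_sub_cancel]
  apply Finset.sum_congr rfl
  intro i _
  have h1 : (1 + i) + 1 = i + 2 := by omega
  have h2 : (1 + i) - 1 = i := by omega
  have h3 : Nat.factorial (1 + i) = Nat.factorial (i + 1) := by rw [Nat.add_comm]
  rw [h1, h2, h3]
  unfold Lv
  push_cast
  ring

/-- Partial alternating sums of the weights. -/
noncomputable def LS (n : ℕ) : ℝ := ∑ i ∈ range n, (-1 : ℝ) ^ i * Lv i

lemma Lseg_succ (n : ℕ) : Lseg (n + 1) = Lseg n + LS (n + 1) := by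
  rw [Lseg_eq, Lseg_eq]
  unfold LS
  have h1 : ∑ i ∈ range (n + 1), (-1 : ℝ) ^ i * Lv i * (((n : ℕ) + 1 : ℝ) - i)
      = ∑ i ∈ range (n + 1), ((-1 : ℝ) ^ i * Lv i * ((n : ℝ) - i) + (-1 : ℝ) ^ i * Lv i) := by
    apply Finset.sum_congr rfl
    intro i _
    ring
  push_cast
  rw [h1, Finset.sum_add_distrib, Finset.sum_range_succ (fun i => (-1 : ℝ) ^ i * Lv i * ((n : ℝ) - i))]
  simp

lemma LS_add (p q : ℕ) : LS (p + q) = LS p + ∑ i ∈ range q, (-1 : ℝ) ^ (p + i) * Lv (p + i) := by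
  induction q with
  | zero => simp [LS]
  | succ q ih =>
    rw [show p + (q + 1) = (p + q) + 1 from rfl]
    unfold LS at *
    rw [Finset.sum_range_succ, ih, Finset.sum_range_succ]
    ring

lemma key1 (k m : ℕ) (hm : Even m) : LS (m + 1 + k) ≤ LS (m + 1) := by
  rw [LS_add (m + 1) k]
  have h : ∑ i ∈ range k, (-1 : ℝ) ^ (m + 1 + i) * Lv (m + 1 + i)
      = -∑ i ∈ range k, (-1 : ℝ) ^ i * Lv (m + 1 + i) := by
    rw [← Finset.sum_neg_distrib]
    apply Finset.sum_congr rfl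
    intro i _
    have : (-1 : ℝ) ^ (m + 1 + i) = -(-1 : ℝ) ^ i := by
      rw [pow_add, pow_add, hm.neg_one_pow]
      ring
    rw [this]; ring
  rw [h]
  have := alt_sum_nonneg (fun i => Lv (m + 1 + i)) (fun i => Lv_nonneg _)
    (fun i => by simpa [show m + 1 + (i + 1) = (m + 1 + i) + 1 by omega] using Lv_antitone (m + 1 + i)) k
  linarith

lemma key2 (k m : ℕ) (hm : Even m) :
    (LS (m + 1 + k) - LS (m + 1)) + (LS (m + 2 + k) - LS (m + 2)) ≤ 0 := by
  rw [LS_add (m + 1) k, LS_add (m + 2) k]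
  have h : ∑ i ∈ range k, (-1 : ℝ) ^ (m + 1 + i) * Lv (m + 1 + i)
      + ∑ i ∈ range k, (-1 : ℝ) ^ (m + 2 + i) * Lv (m + 2 + i)
      = -∑ i ∈ range k, (-1 : ℝ) ^ i * Lu (m + 1 + i) := by
    rw [← Finset.sum_neg_distrib, ← Finset.sum_add_distrib]
    apply Finset.sum_congr rfl
    intro i _
    have e1 : (-1 : ℝ) ^ (m + 1 + i) = -(-1 : ℝ) ^ i := by
      rw [pow_add, pow_add, hm.neg_one_pow]; ring
    have e2 : (-1 : ℝ) ^ (m + 2 + i) = (-1 : ℝ) ^ i := by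
      rw [pow_add, pow_add, hm.neg_one_pow]
      rw [show (-1 : ℝ) ^ 2 = 1 by norm_num]
      ring
    have e3 : m + 2 + i = (m + 1 + i) + 1 := by omega
    rw [e1, e2, e3]
    unfold Lu
    ring
  have := alt_sum_nonneg (fun i => Lu (m + 1 + i)) (fun i => Lu_nonneg _)
    (fun i => by
      have := Lu_antitone (m + i)
      simpa [show m + 1 + (i + 1) = (m + i) + 1 + 1 by omega,
        show m + 1 + i = (m + i) + 1 by omega] using this) k
  linarith

lemma Lseg_zero : Lseg 0 = 0 := by
  unfold Lseg
  simp

lemma delta_succ (k m : ℕ) :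
    Lseg (k + (m + 1)) - Lseg k - Lseg (m + 1)
      = (Lseg (k + m) - Lseg k - Lseg m) + (LS (m + 1 + k) - LS (m + 1)) := by
  rw [show k + (m + 1) = (k + m) + 1 from rfl, Lseg_succ (k + m), Lseg_succ m]
  rw [show m + 1 + k = k + m + 1 by omega]
  ring

lemma delta_even (t k : ℕ) : Lseg (k + 2 * t) - Lseg k - Lseg (2 * t) ≤ 0 := by
  induction t with
  | zero => simp [Lseg_zero]
  | succ t ih =>
    have e : 2 * (t + 1) = (2 * t) + 1 + 1 := by omega
    rw [e, delta_succ k (2 * t + 1), delta_succ k (2 * t)]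
    have h2 := key2 k (2 * t) (even_two_mul t)
    have e2 : 2 * t + 1 + 1 = 2 * t + 2 := rfl
    rw [e2]
    linarith

theorem delta_le (k m : ℕ) : Lseg (k + m) - Lseg k - Lseg m ≤ 0 := by
  rcases Nat.even_or_odd m with hm | hm
  · obtain ⟨t, ht⟩ := hm
    rw [show m = 2 * t by omega]
    exact delta_even t k
  · obtain ⟨t, ht⟩ := hm
    rw [ht, delta_succ k (2 * t)]
    have h1 := key1 k (2 * t) (even_two_mul t)
    have h2 := delta_even t k
    linarith

/-- Subadditivity: for all `k, m ≥ 0`, `L_{k+m} ≤ L_k + L_m`. -/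
theorem Lseg_subadditive (k m : ℕ) : Lseg (k + m) ≤ Lseg k + Lseg m := by
  have := delta_le k m
  linarith
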